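/- If u ∈ ℝ^n, v ∈ ℝ^m are such that the matrix κ defined by κ_{ij} = exp((u_i + v_j − C_{ij})/ρ) μ_i ν_j is a coupling of μ and ν (i.e., its marginals are μ and ν), then κ is the unique minimizer of κ ↦ ⟨κ, C⟩ + ρ KL(κ ‖ μ⊗ν) over K(μ,ν), and the minimum value equals ⟨u,μ⟩ + ⟨v,ν⟩. -/
import Mathlib

lemma ent_ge (x y : ℝ) (hx : 0 ≤ x) (hy : 0 < y) : x - y ≤ x * Real.log (x / y) := by
  rcases eq_or_lt_of_le hx with h0 | h0
  · simp [← h0]; linarith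
  · have ht : 0 < y / x := by positivity
    have h1 : x * Real.log (y / x) ≤ x * (y / x - 1) :=
      mul_le_mul_of_nonneg_left (Real.log_le_sub_one_of_pos ht) h0.le
    have h2 : x * (y / x - 1) = y - x := by field_simp
    have hlog : Real.log (x / y) = - Real.log (y / x) := by
      rw [← Real.log_inv]; congr 1; field_simp
    rw [hlog, mul_neg]; linarith

lemma ent_eq (x y : ℝ) (hx : 0 ≤ x) (hy : 0 < y)
    (h : x * Real.log (x / y) - x + y = 0) : x = y := by
  rcases eq_or_lt_of_le hx with h0 | h0
  · exfalso; rw [← h0] at h; simp at h; linarith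
  · by_contra hne
    have ht : 0 < y / x := by positivity
    have hne' : y / x ≠ 1 := by
      intro heq
      apply hne
      field_simp at heq
      linarith
    have h1 : x * Real.log (y / x) < x * (y / x - 1) :=
      mul_lt_mul_of_pos_left (Real.log_lt_sub_one_of_pos ht hne') h0
    have h2 : x * (y / x - 1) = y - x := by field_simp
    have hlog : Real.log (x / y) = - Real.log (y / x) := by
      rw [← Real.log_inv]; congr 1; field_simp
    rw [hlog, mul_neg] at h
    linarith

def IsCoupling {n m : ℕ} (κ : Fin n → Fin m → ℝ) (μ : Fin n → ℝ) (ν : Fin m → ℝ) : Prop :=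
  (∀ i j, 0 ≤ κ i j) ∧ (∀ i, ∑ j, κ i j = μ i) ∧ (∀ j, ∑ i, κ i j = ν j)

theorem dual_optimal_coupling {n m : ℕ}
    (μ : Fin n → ℝ) (ν : Fin m → ℝ)
    (hμ0 : ∀ i, 0 < μ i) (hμ1 : ∑ i, μ i = 1)
    (hν0 : ∀ j, 0 < ν j) (hν1 : ∑ j, ν j = 1)
    (C : Fin n → Fin m → ℝ) (ρ : ℝ) (hρ : 0 < ρ)
    (u : Fin n → ℝ) (v : Fin m → ℝ)
    (κ : Fin n → Fin m → ℝ)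
    (hκdef : ∀ i j, κ i j = Real.exp ((u i + v j - C i j) / ρ) * (μ i * ν j))
    (hκ : IsCoupling κ μ ν)
    (obj : (Fin n → Fin m → ℝ) → ℝ)
    (hobj : obj = fun κ' =>
      (∑ i, ∑ j, κ' i j * C i j) + ρ * ∑ i, ∑ j, κ' i j * Real.log (κ' i j / (μ i * ν j))) :
    (∀ κ', IsCoupling κ' μ ν → obj κ ≤ obj κ') ∧
    (∀ κ', IsCoupling κ' μ ν → obj κ' = obj κ → κ' = κ) ∧
    obj κ = (∑ i, u i * μ i) + (∑ j, v j * ν j) := by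
  subst hobj
  have hμν : ∀ i j, 0 < μ i * ν j := fun i j => mul_pos (hμ0 i) (hν0 j)
  have hκpos : ∀ i j, 0 < κ i j := fun i j => by rw [hκdef]; exact mul_pos (Real.exp_pos _) (mul_pos (hμ0 i) (hν0 j))
  have hlogratio : ∀ i j, Real.log (κ i j / (μ i * ν j)) = (u i + v j - C i j) / ρ := by
    intro i j
    rw [hκdef, mul_div_assoc, div_self (hμν i j).ne', mul_one, Real.log_exp]
  -- total mass of κ
  have hsumκ : ∑ i, ∑ j, κ i j = 1 := by
    rw [Finset.sum_congr rfl fun i _ => hκ.2.1 i, hμ1]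
  -- decomposition of the objective for any coupling κ'
  have expand : ∀ κ' : Fin n → Fin m → ℝ, IsCoupling κ' μ ν →
      (∑ i, ∑ j, κ' i j * C i j) + ρ * ∑ i, ∑ j, κ' i j * Real.log (κ' i j / (μ i * ν j))
      = ((∑ i, u i * μ i) + (∑ j, v j * ν j))
        + ρ * ∑ i, ∑ j, κ' i j * Real.log (κ' i j / κ i j) := by
    intro κ' ⟨hnn, hrow, hcol⟩
    have point : ∀ i j, κ' i j * Real.log (κ' i j / (μ i * ν j))
        = κ' i j * Real.log (κ' i j / κ i j) + κ' i j * (u i + v j - C i j) / ρ := by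
      intro i j
      rcases eq_or_lt_of_le (hnn i j) with h0 | h0
      · simp [← h0]
      · have hsplit : κ' i j / (μ i * ν j) = (κ' i j / κ i j) * (κ i j / (μ i * ν j)) := by
          have h1 := (hκpos i j).ne'
          have h2 := (hμν i j).ne'
          field_simp
        rw [hsplit, Real.log_mul (div_pos h0 (hκpos i j)).ne' (div_pos (hκpos i j) (hμν i j)).ne',
          hlogratio]
        ring
      -- end point
    have e1 : ∑ i, ∑ j, κ' i j * Real.log (κ' i j / (μ i * ν j))
        = (∑ i, ∑ j, κ' i j * Real.log (κ' i j / κ i j))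
          + (∑ i, ∑ j, κ' i j * (u i + v j - C i j)) / ρ := by
      simp_rw [point, Finset.sum_add_distrib, Finset.sum_div]
    have hA : ∑ i, ∑ j, κ' i j * u i = ∑ i, u i * μ i := by
      refine Finset.sum_congr rfl fun i _ => ?_
      rw [← Finset.sum_mul, hrow i, mul_comm]
    have hB : ∑ i, ∑ j, κ' i j * v j = ∑ j, v j * ν j := by
      rw [Finset.sum_comm]
      refine Finset.sum_congr rfl fun j _ => ?_
      rw [← Finset.sum_mul, hcol j, mul_comm]
    have e2 : ∑ i, ∑ j, κ' i j * (u i + v j - C i j)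
        = (∑ i, u i * μ i) + (∑ j, v j * ν j) - ∑ i, ∑ j, κ' i j * C i j := by
      have : ∀ i j, κ' i j * (u i + v j - C i j)
          = κ' i j * u i + κ' i j * v j - κ' i j * C i j := fun i j => by ring
      simp_rw [this, Finset.sum_sub_distrib, Finset.sum_add_distrib]
      rw [hA, hB]
    rw [e1, mul_add, mul_div_cancel₀ _ hρ.ne', e2]
    ring
  -- value at κ
  have hobjκ : (∑ i, ∑ j, κ i j * C i j)
      + ρ * ∑ i, ∑ j, κ i j * Real.log (κ i j / (μ i * ν j))
      = (∑ i, u i * μ i) + (∑ j, v j * ν j) := by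
    rw [expand κ hκ]
    have : ∀ i j, κ i j * Real.log (κ i j / κ i j) = 0 := by
      intro i j
      rw [div_self (hκpos i j).ne', Real.log_one, mul_zero]
    simp [this]
  -- relative entropy of κ' w.r.t. κ as sum of nonneg terms
  have hrel : ∀ κ' : Fin n → Fin m → ℝ, IsCoupling κ' μ ν →
      ∑ i, ∑ j, κ' i j * Real.log (κ' i j / κ i j)
      = ∑ i, ∑ j, (κ' i j * Real.log (κ' i j / κ i j) - κ' i j + κ i j) := by
    intro κ' ⟨hnn, hrow, hcol⟩
    have hsumκ' : ∑ i, ∑ j, κ' i j = 1 := by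
      rw [Finset.sum_congr rfl fun i _ => hrow i, hμ1]
    have hsplit : ∑ i, ∑ j, (κ' i j * Real.log (κ' i j / κ i j) - κ' i j + κ i j)
        = (∑ i, ∑ j, κ' i j * Real.log (κ' i j / κ i j)) - (∑ i, ∑ j, κ' i j)
          + ∑ i, ∑ j, κ i j := by
      simp [Finset.sum_add_distrib, Finset.sum_sub_distrib]
    rw [hsplit, hsumκ, hsumκ']
    ring
  refine ⟨?_, ?_, hobjκ⟩
  · intro κ' hκ'
    dsimp only
    rw [hobjκ, expand κ' hκ', hrel κ' hκ']
    have hnonneg : 0 ≤ ∑ i, ∑ j, (κ' i j * Real.log (κ' i j / κ i j) - κ' i j + κ i j) := by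
      refine Finset.sum_nonneg fun i _ => Finset.sum_nonneg fun j _ => ?_
      have := ent_ge (κ' i j) (κ i j) (hκ'.1 i j) (hκpos i j)
      linarith
    nlinarith
  · intro κ' hκ' heq
    dsimp only at heq
    rw [hobjκ, expand κ' hκ', hrel κ' hκ'] at heq
    have hS : ∑ i, ∑ j, (κ' i j * Real.log (κ' i j / κ i j) - κ' i j + κ i j) = 0 := by
      have := heq
      nlinarith [this]
    have hterm : ∀ i ∈ Finset.univ, ∀ j ∈ (Finset.univ : Finset (Fin m)),
        κ' i j * Real.log (κ' i j / κ i j) - κ' i j + κ i j = 0 := by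
      have hpt : ∀ i ∈ (Finset.univ : Finset (Fin n)),
          0 ≤ ∑ j, (κ' i j * Real.log (κ' i j / κ i j) - κ' i j + κ i j) := by
        intro i _
        refine Finset.sum_nonneg fun j _ => ?_
        have := ent_ge (κ' i j) (κ i j) (hκ'.1 i j) (hκpos i j)
        linarith
      have hrows := (Finset.sum_eq_zero_iff_of_nonneg hpt).mp hS
      intro i hi j hj
      have hjn : ∀ j ∈ (Finset.univ : Finset (Fin m)),
          0 ≤ κ' i j * Real.log (κ' i j / κ i j) - κ' i j + κ i j := by
        intro j _
        have := ent_ge (κ' i j) (κ i j) (hκ'.1 i j) (hκpos i j)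
        linarith
      exact (Finset.sum_eq_zero_iff_of_nonneg hjn).mp (hrows i hi) j hj
    funext i j
    exact ent_eq (κ' i j) (κ i j) (hκ'.1 i j) (hκpos i j)
      (hterm i (Finset.mem_univ i) j (Finset.mem_univ j))
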